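/- With the notation of the model, for all η ∈ V and n ∈ ℕ one has [F, c∘d] η_n = −λ q^{3n+1} (wTη)_n − λ q^{n+1} λ_{n+1} λ_{n+2} (wSη)_{n+2}, where [F, X] := F∘X − X∘F. -/
import Mathlib


/-- `lam q n = λ_n = (1 - q^(2n))^(1/2)`, so `lam q 0 = 0`. -/
noncomputable def lam (q : ℝ) (n : ℕ) : ℝ := Real.sqrt (1 - q ^ (2 * n))

/-- Section 6 of the paper: the commutator `[F, π(x₋)]` for `x₋ = cd`, a generator of the Podles sphere algebra `𝒪(S²_q)`. -/
theorem commutator_F_cd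
    (q : ℝ) (hq0 : 0 < q) (hq1 : q < 1)
    (V : Type*) [AddCommGroup V] [Module ℂ V]
    (w : V ≃ₗ[ℂ] V) (T S R : V →ₗ[ℂ] V)
    (hT : ∀ η : V, w (T (w.symm η)) = (q : ℂ) • T η)
    (hS : ∀ η : V, w (S (w.symm η)) = (q : ℂ) • S η)
    (hR : ∀ η : V, w (w (R (w.symm (w.symm η)))) + ((q ^ 2 : ℝ) : ℂ) • R η
            = ((1 + q ^ 2 : ℝ) : ℂ) • w (R (w.symm η)))
    (a b c d F : (ℕ →₀ V) →ₗ[ℂ] (ℕ →₀ V))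
    (ha : ∀ (η : V) (n : ℕ),
      a (Finsupp.single n η) = (lam q n : ℂ) • Finsupp.single (n - 1) η)
    (hb : ∀ (η : V) (n : ℕ),
      b (Finsupp.single n η) = -(((q ^ (n + 1) : ℝ)) : ℂ) • Finsupp.single n (w.symm η))
    (hc : ∀ (η : V) (n : ℕ),
      c (Finsupp.single n η) = ((q ^ n : ℝ) : ℂ) • Finsupp.single n (w η))
    (hd : ∀ (η : V) (n : ℕ),
      d (Finsupp.single n η) = (lam q (n + 1) : ℂ) • Finsupp.single (n + 1) η)
    (hF : ∀ (η : V) (n : ℕ),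
      F (Finsupp.single n η) = (lam q n : ℂ) • Finsupp.single (n - 1) (T η)
        + Finsupp.single n ((w ^ n) (R ((w.symm ^ n) η)))
        + (lam q (n + 1) : ℂ) • Finsupp.single (n + 1) (S η))
    :
    ∀ (η : V) (n : ℕ),
      (F ∘ₗ (c ∘ₗ d) - (c ∘ₗ d) ∘ₗ F) (Finsupp.single n η)
        = -(((q - q⁻¹) * q ^ (3 * n + 1) : ℝ) : ℂ) • Finsupp.single n (w (T η))
          - (((q - q⁻¹) * q ^ (n + 1) * lam q (n + 1) * lam q (n + 2) : ℝ) : ℂ) •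
              Finsupp.single (n + 2) (w (S η)) := by
  intro η n
  have hqC : (q : ℂ) ≠ 0 := by exact_mod_cast hq0.ne'
  have hT' : T (w η) = (q : ℂ)⁻¹ • w (T η) := by
    have h := hT (w η); rw [LinearEquiv.symm_apply_apply] at h
    rw [h, smul_smul, inv_mul_cancel₀ hqC, one_smul]
  have hS' : S (w η) = (q : ℂ)⁻¹ • w (S η) := by
    have h := hS (w η); rw [LinearEquiv.symm_apply_apply] at h
    rw [h, smul_smul, inv_mul_cancel₀ hqC, one_smul]
  have hcd : ∀ (m : ℕ) (x : V), (c ∘ₗ d) (Finsupp.single m x)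
      = ((q ^ (m+1) * lam q (m+1) : ℝ) : ℂ) • Finsupp.single (m+1) (w x) := by
    intro m x
    rw [LinearMap.comp_apply, hd, map_smul, hc, smul_smul]
    push_cast
    ring_nf
  simp only [LinearMap.sub_apply, LinearMap.comp_apply, hd, map_smul, hc, hF, map_add,
    smul_add, Nat.add_sub_cancel, smul_smul]
  have hmid : (w ^ (n+1)) (R ((w.symm ^ (n+1)) (w η))) = w ((w ^ n) (R ((w.symm ^ n) η))) := by
    have h1 : (w.symm ^ (n+1)) (w η) = (w.symm ^ n) η := by
      rw [LinearEquiv.pow_apply, LinearEquiv.pow_apply, Function.iterate_succ_apply,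
        LinearEquiv.symm_apply_apply]
    rw [h1, LinearEquiv.pow_apply, Function.iterate_succ_apply', LinearEquiv.pow_apply,
      LinearEquiv.pow_apply]
  have hfix : ((lam q n : ℂ) * ((lam q (n - 1 + 1) : ℂ) * ((q ^ (n - 1 + 1) : ℝ) : ℂ))) •
        (Finsupp.single (n - 1 + 1) (w (T η)) : ℕ →₀ V)
      = ((lam q n : ℂ) * ((lam q n : ℂ) * ((q ^ n : ℝ) : ℂ))) • Finsupp.single n (w (T η)) := by
    cases n with
    | zero => simp [lam]
    | succ m => simp only [Nat.add_sub_cancel]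
  rw [hmid, hT', hS', hfix, ← Finsupp.smul_single, ← Finsupp.smul_single]
  have l1 : ∀ m : ℕ, lam q m * lam q m = 1 - q ^ (2 * m) := by
    intro m
    refine Real.mul_self_sqrt ?_
    have : q ^ (2 * m) ≤ 1 := pow_le_one₀ hq0.le hq1.le
    linarith
  have l1C : ∀ m : ℕ, (lam q m : ℂ) * (lam q m : ℂ) = 1 - (q : ℂ) ^ (2 * m) := by
    intro m; exact_mod_cast l1 m
  match_scalars
  · field_simp
    linear_combination ((q : ℂ)) ^ (n + 1) * l1C (n + 1) - ((q : ℂ)) ^ (n + 1) * l1C n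
  · ring
  · field_simp
    ring
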